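/- Let X be a complex manifold (or an open subset of ℂⁿ), and let γ : X → X be a holomorphic map whose image γ(X) is relatively compact in X. Then the pullback operator γ* : H⁰_b(O_X) → H⁰_b(O_X), f ↦ f ∘ γ, on the Banach space of bounded holomorphic functions on X with the sup-norm, is a compact operator. -/

import Mathlib

open Metric Set

/-- Cauchy/Schwarz-type estimate: a holomorphic function bounded by `C'` on open `U` is
Lipschitz with constant `(2*C'+1)/r` on any ball of radius `r` contained in `U`. -/
lemma holo_lipschitz_aux {n : ℕ} {U : Set (EuclideanSpace ℂ (Fin n))} (hU : IsOpen U)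
    {f : EuclideanSpace ℂ (Fin n) → ℂ} (hf : DifferentiableOn ℂ f U)
    {C' : ℝ} (hC : ∀ x ∈ U, ‖f x‖ ≤ C') {z w : EuclideanSpace ℂ (Fin n)} {r : ℝ}
    (hr : 0 < r) (hball : Metric.ball z r ⊆ U) (hw : dist w z < r) :
    dist (f w) (f z) ≤ (2 * C' + 1) / r * dist w z := by
  have hzU : z ∈ U := hball (mem_ball_self hr)
  have hC0 : 0 ≤ C' := le_trans (norm_nonneg _) (hC z hzU)
  set v : EuclideanSpace ℂ (Fin n) := w - z with hv
  rcases eq_or_ne v 0 with h0 | h0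
  · have hwz : w = z := sub_eq_zero.mp h0
    simp [hwz]
  · have hvnorm : 0 < ‖v‖ := norm_pos_iff.mpr h0
    have hvlt : ‖v‖ < r := by simpa [hv, ← dist_eq_norm] using hw
    set g : ℂ → ℂ := fun t => f (z + t • v) with hg
    have hmap : ∀ t : ℂ, t ∈ ball (0 : ℂ) (r / ‖v‖) → z + t • v ∈ ball z r := by
      intro t ht
      have h1 : ‖t‖ < r / ‖v‖ := by simpa [dist_eq_norm] using ht
      have h2 : ‖t‖ * ‖v‖ < r := (lt_div_iff₀ hvnorm).mp h1
      simpa [dist_eq_norm, norm_smul, add_sub_cancel_left] using h2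
    have hgd : DifferentiableOn ℂ g (ball (0 : ℂ) (r / ‖v‖)) := by
      intro t ht
      have h1 : DifferentiableAt ℂ (fun t : ℂ => z + t • v) t :=
        (differentiableAt_const z).add ((differentiableAt_id).smul_const v)
      have hmem : z + t • v ∈ U := hball (hmap t ht)
      have h2 : DifferentiableAt ℂ f (z + t • v) :=
        hf.differentiableAt (hU.mem_nhds hmem)
      exact (h2.comp t h1).differentiableWithinAt
    have hmaps : MapsTo g (ball (0 : ℂ) (r / ‖v‖)) (ball (g 0) (2 * C' + 1)) := by
      intro t ht
      have h1 : z + t • v ∈ U := hball (hmap t ht)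
      have h2 : z + (0 : ℂ) • v ∈ U := by simpa using hzU
      have : dist (g t) (g 0) ≤ ‖g t‖ + ‖g 0‖ := dist_le_norm_add_norm _ _
      have hb : dist (g t) (g 0) ≤ C' + C' := this.trans (add_le_add (hC _ h1) (hC _ h2))
      have : dist (g t) (g 0) < 2 * C' + 1 := by linarith
      exact this
    have h1mem : (1 : ℂ) ∈ ball (0 : ℂ) (r / ‖v‖) := by
      simp only [mem_ball, dist_zero_right, norm_one]
      exact (one_lt_div hvnorm).mpr hvlt
    have key := Complex.dist_le_div_mul_dist_of_mapsTo_ball hgd (hmaps.mono_right ball_subset_closedBall) h1mem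
    have hg1 : g 1 = f w := by simp [hg, hv]
    have hg0 : g 0 = f z := by simp [hg]
    rw [hg1, hg0] at key
    have hdist1 : dist (1 : ℂ) 0 = 1 := by simp
    rw [hdist1, mul_one] at key
    have hdwz : dist w z = ‖v‖ := by rw [dist_eq_norm]
    rw [hdwz]
    calc dist (f w) (f z) ≤ (2 * C' + 1) / (r / ‖v‖) := key
      _ = (2 * C' + 1) / r * ‖v‖ := by
          field_simp


/- STATEMENT 12: if γ : X → X is holomorphic with γ(X) relatively compact in X,
then the pullback γ* on bounded holomorphic functions is a compact operator:
the image of any sup-norm ball consists of a relatively compact family in the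
space of bounded continuous functions with the sup norm. -/
set_option synthInstance.maxHeartbeats 1000000 in
theorem stmt_12 (n : ℕ) (U : Set (EuclideanSpace ℂ (Fin n))) (hU : IsOpen U)
    (γ : EuclideanSpace ℂ (Fin n) → EuclideanSpace ℂ (Fin n))
    (hγU : Set.MapsTo γ U U) (hγhol : DifferentiableOn ℂ γ U)
    (hcpt : IsCompact (closure (γ '' U))) (hsub : closure (γ '' U) ⊆ U)
    (C : ℝ) :
    IsCompact (closure {g : BoundedContinuousFunction ↥U ℂ |
      ∃ f : EuclideanSpace ℂ (Fin n) → ℂ, DifferentiableOn ℂ f U ∧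
        (∀ x ∈ U, ‖f x‖ ≤ C) ∧ ∀ x : ↥U, g x = f (γ ↑x)}) := by
  set K : Set (EuclideanSpace ℂ (Fin n)) := closure (γ '' U) with hK
  haveI : CompactSpace ↥K := isCompact_iff_compactSpace.1 hcpt
  set C' : ℝ := max C 0 with hC'
  have hC'0 : 0 ≤ C' := le_max_right _ _
  obtain ⟨r, hr0, hrsub⟩ := hcpt.exists_thickening_subset_open hU hsub
  have hballs : ∀ z ∈ K, ball z r ⊆ U := by
    intro z hz w hw
    exact hrsub (Metric.mem_thickening_iff.mpr ⟨z, hz, hw⟩)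
  -- the continuous map `↥U → ↥K` induced by `γ`
  have hγcont : Continuous (fun x : ↥U => γ (↑x : EuclideanSpace ℂ (Fin n))) :=
    hγhol.continuousOn.restrict
  set γ' : C(↥U, ↥K) :=
    ⟨fun x => ⟨γ ↑x, subset_closure ⟨↑x, x.2, rfl⟩⟩, hγcont.subtype_mk _⟩ with hγ'
  -- the family of restrictions to `K`
  set B : Set (BoundedContinuousFunction ↥K ℂ) :=
    {h | ∃ f : EuclideanSpace ℂ (Fin n) → ℂ, DifferentiableOn ℂ f U ∧
      (∀ x ∈ U, ‖f x‖ ≤ C) ∧ ∀ y : ↥K, h y = f ↑y} with hB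
  have hBcpt : IsCompact (closure B) := by
    apply BoundedContinuousFunction.arzela_ascoli (closedBall (0 : ℂ) C')
      (isCompact_closedBall _ _)
    · rintro h y ⟨f, hf, hfC, hhf⟩
      rw [mem_closedBall, dist_zero_right, hhf y]
      exact (hfC _ (hsub y.2)).trans (le_max_left _ _)
    · intro y₀
      rw [Metric.equicontinuousAt_iff_right]
      intro ε hε
      set L : ℝ := (2 * C' + 1) / r with hLdef
      have hL0 : 0 < L := div_pos (by linarith) hr0
      set δ : ℝ := min (r / 2) (ε / (2 * L)) with hδ
      have hδ0 : 0 < δ := lt_min (by linarith) (div_pos hε (by linarith))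
      have hc : ContinuousAt (fun y : ↥K => (↑y : EuclideanSpace ℂ (Fin n))) y₀ :=
        continuous_subtype_val.continuousAt
      have hev : ∀ᶠ y : ↥K in nhds y₀, dist (↑y : EuclideanSpace ℂ (Fin n)) ↑y₀ < δ :=
        Metric.tendsto_nhds.mp hc δ hδ0
      filter_upwards [hev] with y hy
      rintro ⟨h, f, hf, hfC, hhf⟩
      simp only [hhf]
      have hfC' : ∀ x ∈ U, ‖f x‖ ≤ C' := fun x hx => (hfC x hx).trans (le_max_left _ _)
      have hdlt : dist (↑y : EuclideanSpace ℂ (Fin n)) ↑y₀ < r :=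
        hy.trans_le ((min_le_left _ _).trans (by linarith))
      have key := holo_lipschitz_aux hU hf hfC' hr0 (hballs _ y₀.2) hdlt
      rw [dist_comm]
      calc dist (f ↑y) (f ↑y₀) ≤ L * dist (↑y : EuclideanSpace ℂ (Fin n)) ↑y₀ := key
        _ ≤ L * δ := by nlinarith [hy.le]
        _ ≤ L * (ε / (2 * L)) := by nlinarith [min_le_right (r / 2) (ε / (2 * L))]
        _ = ε / 2 := by field_simp
        _ < ε := by linarith
  -- push forward by composition with `γ'`
  have himg : IsCompact ((fun h : BoundedContinuousFunction ↥K ℂ =>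
      h.compContinuous γ') '' closure B) :=
    hBcpt.image (BoundedContinuousFunction.continuous_compContinuous γ')
  apply himg.of_isClosed_subset isClosed_closure
  apply closure_minimal _ himg.isClosed
  rintro g ⟨f, hf, hfC, hgf⟩
  have hcontK : Continuous (fun y : ↥K => f ↑y) := (hf.continuousOn.mono hsub).restrict
  set h : BoundedContinuousFunction ↥K ℂ :=
    ⟨⟨fun y => f ↑y, hcontK⟩, ⟨2 * C', fun y₁ y₂ => by
      have h1 : ‖f ↑y₁‖ ≤ C' := (hfC _ (hsub y₁.2)).trans (le_max_left _ _)
      have h2 : ‖f ↑y₂‖ ≤ C' := (hfC _ (hsub y₂.2)).trans (le_max_left _ _)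
      calc dist (f ↑y₁) (f ↑y₂) ≤ ‖f ↑y₁‖ + ‖f ↑y₂‖ := dist_le_norm_add_norm _ _
        _ ≤ 2 * C' := by linarith⟩⟩ with hh
  refine ⟨h, subset_closure ⟨f, hf, hfC, fun y => rfl⟩, ?_⟩
  ext x
  rw [BoundedContinuousFunction.compContinuous_apply]
  exact (hgf x).symm
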